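/- Suppose x₀ ∈ Ω and there exist constants q > 0, R₀, m₀, M₀ > 0 with m₀|x - x₀|^q ≤ s(x) ≤ M₀|x - x₀|^q for all |x - x₀| ≤ R₀. Then the weight w(x,y) = y^{1-2s(x)} is not in the Muckenhoupt class A₂(C), i.e., there is no constant M such that (1/|Q| ∫_Q w)(1/|Q| ∫_Q w^{-1}) ≤ M for all open cubes Q ⊂ C. -/

import Mathlib

open MeasureTheory Set

section AuxWeight

open Filter Real

private lemma aux_b_tendsto (q c : ℝ) (hq : 0 < q) :
    Filter.Tendsto (fun r : ℝ => c * r ^ q) (nhdsWithin 0 (Ioi 0)) (nhds 0) := by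
  have h0 : Filter.Tendsto (fun r : ℝ => r ^ q) (nhds 0) (nhds 0) := by
    have := (Real.continuousAt_rpow_const 0 q (Or.inr hq.le)).tendsto
    simpa [Real.zero_rpow hq.ne'] using this
  have := (h0.const_mul c).mono_left (nhdsWithin_le_nhds (s := Ioi (0:ℝ)))
  simpa using this

private lemma aux_pow_tendsto (q c : ℝ) (hq : 0 < q) :
    Filter.Tendsto (fun r : ℝ => (2*r) ^ (c * r ^ q)) (nhdsWithin 0 (Ioi 0)) (nhds 1) := by
  have hlog : Filter.Tendsto (fun r : ℝ => Real.log (2*r) * (c * r ^ q))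
      (nhdsWithin 0 (Ioi 0)) (nhds 0) := by
    have h1 : Filter.Tendsto (fun r : ℝ => Real.log 2 * (c * r ^ q))
        (nhdsWithin 0 (Ioi 0)) (nhds 0) := by
      simpa using (aux_b_tendsto q c hq).const_mul (Real.log 2)
    have h2 : Filter.Tendsto (fun r : ℝ => c * (Real.log r * r ^ q))
        (nhdsWithin 0 (Ioi 0)) (nhds 0) := by
      simpa using (tendsto_log_mul_rpow_nhdsGT_zero hq).const_mul c
    have := h1.add h2
    simp only [add_zero] at this
    apply this.congr'
    filter_upwards [self_mem_nhdsWithin] with r hr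
    rw [Real.log_mul two_ne_zero (ne_of_gt hr)]
    ring
  have hexp := (Real.continuous_exp.tendsto 0).comp hlog
  rw [Real.exp_zero] at hexp
  apply hexp.congr'
  filter_upwards [self_mem_nhdsWithin] with r hr
  have hr' : (0:ℝ) < r := hr
  rw [Function.comp_apply, ← Real.rpow_def_of_pos (by positivity : (0:ℝ) < 2*r)]

/-- integrability of `p.2 ^ e p.1` on a set where `δ ≤ p.2 ≤ 1` and `-1 ≤ e p.1`. -/
private lemma aux_integrableOn {N : ℕ} (e : (Fin N → ℝ) → ℝ) (he : Measurable e)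
    (Q : Set ((Fin N → ℝ) × ℝ)) (hQ : MeasurableSet Q) (hfin : volume Q ≠ ⊤)
    (δ : ℝ) (hδ : 0 < δ)
    (hy : ∀ p ∈ Q, δ ≤ p.2 ∧ p.2 ≤ 1) (hem : ∀ p ∈ Q, -1 ≤ e p.1) :
    IntegrableOn (fun p : (Fin N → ℝ) × ℝ => p.2 ^ (e p.1)) Q volume := by
  have hg : Measurable (fun p : (Fin N → ℝ) × ℝ => Real.exp (Real.log p.2 * e p.1)) :=
    Real.measurable_exp.comp ((Real.measurable_log.comp measurable_snd).mul
      (he.comp measurable_fst))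
  have heq : (fun p : (Fin N → ℝ) × ℝ => p.2 ^ (e p.1))
      =ᵐ[volume.restrict Q] (fun p => Real.exp (Real.log p.2 * e p.1)) := by
    rw [Filter.EventuallyEq, ae_restrict_iff' hQ]
    refine Filter.Eventually.of_forall (fun p hp => ?_)
    exact Real.rpow_def_of_pos (lt_of_lt_of_le hδ (hy p hp).1) _
  refine ⟨AEStronglyMeasurable.congr hg.aestronglyMeasurable heq.symm, ?_⟩
  apply HasFiniteIntegral.restrict_of_bounded (C := δ⁻¹) hfin.lt_top
  rw [ae_restrict_iff' hQ]
  refine Filter.Eventually.of_forall (fun p hp => ?_)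
  have h0 : 0 < p.2 := lt_of_lt_of_le hδ (hy p hp).1
  have h1 : p.2 ≤ 1 := (hy p hp).2
  rw [Real.norm_eq_abs, abs_of_nonneg (Real.rpow_nonneg h0.le _)]
  calc p.2 ^ (e p.1) ≤ p.2 ^ (-1 : ℝ) :=
        Real.rpow_le_rpow_of_exponent_ge h0 h1 (hem p hp)
    _ = (p.2)⁻¹ := Real.rpow_neg_one _
    _ ≤ δ⁻¹ := by
        apply inv_anti₀ hδ (hy p hp).1

end AuxWeight

set_option maxHeartbeats 1000000

/-- If `s` vanishes at `x₀ ∈ Ω` at a power rate,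
`m₀|x-x₀|^q ≤ s(x) ≤ M₀|x-x₀|^q` for `|x-x₀| ≤ R₀`, then the weight
`w(x,y) = y^(1-2 s x)` is NOT in the Muckenhoupt class `A₂(C)`, `C = Ω × (0,∞)`:
no constant `M` bounds the product of cube averages of `w` and `w⁻¹` over all open
cubes `Q ⊆ C` (cubes realized as sup-norm balls). -/
theorem weight_not_A2_of_power_vanishing
    {N : ℕ} (Ω : Set (Fin N → ℝ)) (hΩopen : IsOpen Ω) (hΩbdd : Bornology.IsBounded Ω)
    (s : (Fin N → ℝ) → ℝ) (hs : Measurable s)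
    (hs01 : ∀ x, s x ∈ Icc (0:ℝ) 1)
    (x₀ : Fin N → ℝ) (hx₀ : x₀ ∈ Ω)
    (q R₀ m₀ M₀ : ℝ) (hq : 0 < q) (hR₀ : 0 < R₀) (hm₀ : 0 < m₀) (hM₀ : 0 < M₀)
    (hsand : ∀ x : Fin N → ℝ, ‖x - x₀‖ ≤ R₀ →
      m₀ * ‖x - x₀‖ ^ q ≤ s x ∧ s x ≤ M₀ * ‖x - x₀‖ ^ q) :
    ¬ ∃ M : ℝ,
      ∀ (z : (Fin N → ℝ) × ℝ) (r : ℝ), 0 < r → Metric.ball z r ⊆ Ω ×ˢ Ioi (0:ℝ) →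
        ((volume (Metric.ball z r)).toReal)⁻¹ *
            (∫ p in Metric.ball z r, p.2 ^ (1 - 2 * s p.1) ∂volume) *
          (((volume (Metric.ball z r)).toReal)⁻¹ *
            (∫ p in Metric.ball z r, p.2 ^ (2 * s p.1 - 1) ∂volume)) ≤ M := by
  rintro ⟨M, hM⟩
  obtain ⟨ρ, hρ0, hρ⟩ := Metric.isOpen_iff.1 hΩopen x₀ hx₀
  -- choose a small radius r
  have E1 : ∀ᶠ r in nhdsWithin (0:ℝ) (Ioi 0), (3/4:ℝ) ≤ (2*r) ^ (2*M₀ * r ^ q) :=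
    (aux_pow_tendsto q (2*M₀) hq).eventually (eventually_ge_nhds (by norm_num))
  have E2 : ∀ᶠ r in nhdsWithin (0:ℝ) (Ioi 0), 2*M₀*r^q < 1/(4*(|M|+1)) :=
    (aux_b_tendsto q (2*M₀) hq).eventually (eventually_lt_nhds (by positivity))
  have E3 : ∀ᶠ r in nhdsWithin (0:ℝ) (Ioi 0), r ∈ Ioo (0:ℝ) (min ρ (min R₀ (1/4))) :=
    Filter.eventually_of_mem (Ioo_mem_nhdsGT_of_mem
      ⟨le_refl _, by positivity⟩) (fun r hr => hr)
  obtain ⟨r, h1, h2, hr0, hrlt⟩ :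
      ∃ r : ℝ, (3/4:ℝ) ≤ (2*r) ^ (2*M₀ * r ^ q) ∧ 2*M₀*r^q < 1/(4*(|M|+1)) ∧
        0 < r ∧ r < min ρ (min R₀ (1/4)) := by
    obtain ⟨r, h1, h2, h3⟩ := (E1.and (E2.and E3)).exists
    exact ⟨r, h1, h2, h3.1, h3.2⟩
  have hrρ : r < ρ := lt_of_lt_of_le hrlt (min_le_left _ _)
  have hrR : r < R₀ := lt_of_lt_of_le hrlt ((min_le_right _ _).trans (min_le_left _ _))
  have hr4 : r < 1/4 := lt_of_lt_of_le hrlt ((min_le_right _ _).trans (min_le_right _ _))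
  set b : ℝ := 2*M₀*r^q with hbdef
  have hb : 0 < b := by positivity
  -- choose δ
  set δ : ℝ := min r ((4:ℝ) ^ (-(1/b))) with hδdef
  have hδ0 : 0 < δ := lt_min hr0 (Real.rpow_pos_of_pos (by norm_num) _)
  have hδr : δ ≤ r := min_le_left _ _
  have hδb : δ ^ b ≤ 1/4 := by
    calc δ ^ b ≤ ((4:ℝ) ^ (-(1/b))) ^ b :=
          Real.rpow_le_rpow hδ0.le (min_le_right _ _) hb.le
      _ = (4:ℝ) ^ (-(1/b) * b) := (Real.rpow_mul (by norm_num) _ _).symm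
      _ = (4:ℝ) ^ (-1 : ℝ) := by rw [show -(1/b) * b = -1 by field_simp]
      _ = 1/4 := by rw [Real.rpow_neg_one]; norm_num
  set z : (Fin N → ℝ) × ℝ := (x₀, r + δ) with hzdef
  have hQeq : Metric.ball z r = Metric.ball x₀ r ×ˢ Ioo δ (2*r+δ) := by
    rw [← ball_prod_same, Real.ball_eq_Ioo]
    congr 2 <;> ring
  have hQmeas : MeasurableSet (Metric.ball z r) := Metric.isOpen_ball.measurableSet
  have hQsub : Metric.ball z r ⊆ Ω ×ˢ Ioi (0:ℝ) := by
    rw [hQeq]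
    apply prod_mono
    · exact (Metric.ball_subset_ball hrρ.le).trans hρ
    · exact fun y hy => lt_trans hδ0 hy.1
  -- volume computations
  have hWvol : volume (Metric.ball x₀ r) = ENNReal.ofReal ((2*r)^N) := by
    rw [Real.volume_pi_ball _ hr0, Fintype.card_fin]
  have hWre : (volume (Metric.ball x₀ r)).toReal = (2*r)^N := by
    rw [hWvol, ENNReal.toReal_ofReal (by positivity)]
  have hVvol : volume (Metric.ball z r)
      = ENNReal.ofReal ((2*r)^N) * ENNReal.ofReal (2*r) := by
    rw [hQeq, Measure.volume_eq_prod, Measure.prod_prod, hWvol, Real.volume_Ioo,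
      show 2*r+δ-δ = 2*r by ring]
  have hV : (volume (Metric.ball z r)).toReal = (2*r)^N * (2*r) := by
    rw [hVvol, ENNReal.toReal_mul, ENNReal.toReal_ofReal (by positivity),
      ENNReal.toReal_ofReal (by positivity)]
  have hVfin : volume (Metric.ball z r) ≠ ⊤ := by
    rw [hVvol]
    exact ENNReal.mul_ne_top ENNReal.ofReal_ne_top ENNReal.ofReal_ne_top
  -- pointwise facts on the ball
  have hmem : ∀ p ∈ Metric.ball z r,
      dist p.1 x₀ < r ∧ δ < p.2 ∧ p.2 < 2*r+δ := by
    intro p hp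
    rw [hQeq] at hp
    exact ⟨hp.1, hp.2.1, hp.2.2⟩
  have hy1 : ∀ p ∈ Metric.ball z r, δ ≤ p.2 ∧ p.2 ≤ 1 := by
    intro p hp
    obtain ⟨-, h2, h3⟩ := hmem p hp
    refine ⟨h2.le, ?_⟩
    have : 2*r + δ ≤ 1 := by
      have := hδr
      linarith
    linarith
  have hspos : ∀ p ∈ Metric.ball z r, 0 ≤ s p.1 ∧ 2 * s p.1 ≤ b := by
    intro p hp
    obtain ⟨h1', -, -⟩ := hmem p hp
    have hd : ‖p.1 - x₀‖ < r := by rwa [← dist_eq_norm]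
    obtain ⟨-, hup⟩ := hsand p.1 (hd.le.trans hrR.le)
    refine ⟨(hs01 p.1).1, ?_⟩
    have : ‖p.1 - x₀‖ ^ q ≤ r ^ q :=
      Real.rpow_le_rpow (norm_nonneg _) hd.le hq.le
    have : s p.1 ≤ M₀ * r ^ q := hup.trans (by nlinarith)
    rw [hbdef]; linarith
  -- integrability of the four integrands
  have hint₁ : IntegrableOn (fun p : (Fin N → ℝ) × ℝ => p.2 ^ (1 - 2 * s p.1))
      (Metric.ball z r) volume := by
    apply aux_integrableOn _ (measurable_const.sub (hs.const_mul 2)) _ hQmeas hVfin δ hδ0 hy1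
    intro p hp
    have := (hs01 p.1).2
    simp only [Pi.sub_apply]
    linarith
  have hint₂ : IntegrableOn (fun p : (Fin N → ℝ) × ℝ => p.2 ^ (2 * s p.1 - 1))
      (Metric.ball z r) volume := by
    apply aux_integrableOn _ ((hs.const_mul 2).sub measurable_const) _ hQmeas hVfin δ hδ0 hy1
    intro p hp
    have := (hs01 p.1).1
    simp only [Pi.sub_apply]
    linarith
  have hintl₁ : IntegrableOn (fun p : (Fin N → ℝ) × ℝ => p.2 ^ (1:ℝ))
      (Metric.ball z r) volume := by
    apply aux_integrableOn (fun _ => (1:ℝ)) measurable_const _ hQmeas hVfin δ hδ0 hy1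
    intro p hp; norm_num
  have hintl₂ : IntegrableOn (fun p : (Fin N → ℝ) × ℝ => p.2 ^ (b-1))
      (Metric.ball z r) volume := by
    apply aux_integrableOn (fun _ => b-1) measurable_const _ hQmeas hVfin δ hδ0 hy1
    intro p hp; linarith
  -- lower bounds on the two integrals
  have hmono₁ : ∫ p in Metric.ball z r, p.2 ^ (1:ℝ) ∂volume
      ≤ ∫ p in Metric.ball z r, p.2 ^ (1 - 2 * s p.1) ∂volume := by
    apply setIntegral_mono_on hintl₁ hint₁ hQmeas
    intro p hp
    have h0 : 0 < p.2 := lt_of_lt_of_le hδ0 (hy1 p hp).1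
    exact Real.rpow_le_rpow_of_exponent_ge h0 (hy1 p hp).2
      (by have := (hspos p hp).1; linarith)
  have hmono₂ : ∫ p in Metric.ball z r, p.2 ^ (b-1) ∂volume
      ≤ ∫ p in Metric.ball z r, p.2 ^ (2 * s p.1 - 1) ∂volume := by
    apply setIntegral_mono_on hintl₂ hint₂ hQmeas
    intro p hp
    have h0 : 0 < p.2 := lt_of_lt_of_le hδ0 (hy1 p hp).1
    exact Real.rpow_le_rpow_of_exponent_ge h0 (hy1 p hp).2
      (by have := (hspos p hp).2; linarith)
  -- compute the lower integrals via Fubini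
  have hIoo : ∀ c : ℝ, -1 < c →
      ∫ y in Ioo δ (2*r+δ), y ^ c ∂volume = ((2*r+δ) ^ (c+1) - δ ^ (c+1))/(c+1) := by
    intro c hc
    rw [← integral_Ioc_eq_integral_Ioo, ← intervalIntegral.integral_of_le (by linarith)]
    exact integral_rpow (Or.inl hc)
  have hfub : ∀ c : ℝ, IntegrableOn (fun p : (Fin N → ℝ) × ℝ => p.2 ^ c)
        (Metric.ball z r) volume →
      ∫ p in Metric.ball z r, p.2 ^ c ∂volume
        = (2*r)^N * ∫ y in Ioo δ (2*r+δ), y ^ c ∂volume := by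
    intro c hint
    rw [hQeq] at hint ⊢
    rw [Measure.volume_eq_prod] at hint ⊢
    rw [setIntegral_prod _ hint]
    simp only []
    rw [setIntegral_const, measureReal_def, hWre, smul_eq_mul]
  -- quantitative lower bounds
  have hI1low : (2*r)^N * (2*r^2)
      ≤ ∫ p in Metric.ball z r, p.2 ^ (1 - 2 * s p.1) ∂volume := by
    refine le_trans ?_ hmono₁
    rw [hfub 1 hintl₁, hIoo 1 (by norm_num)]
    have e1 : ((2*r+δ):ℝ) ^ ((1:ℝ)+1) = (2*r+δ)^(2:ℕ) := by
      rw [show (1:ℝ)+1 = ((2:ℕ):ℝ) by norm_num, Real.rpow_natCast]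
    have e2 : (δ:ℝ) ^ ((1:ℝ)+1) = δ^(2:ℕ) := by
      rw [show (1:ℝ)+1 = ((2:ℕ):ℝ) by norm_num, Real.rpow_natCast]
    rw [e1, e2]
    apply mul_le_mul_of_nonneg_left _ (by positivity)
    nlinarith [hδ0.le, hr0.le, hδr]
  have hI2low : (2*r)^N * (1/(2*b))
      ≤ ∫ p in Metric.ball z r, p.2 ^ (2 * s p.1 - 1) ∂volume := by
    refine le_trans ?_ hmono₂
    rw [hfub (b-1) hintl₂, hIoo (b-1) (by linarith)]
    rw [show b - 1 + 1 = b by ring]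
    apply mul_le_mul_of_nonneg_left _ (by positivity)
    have h2rb : (3/4:ℝ) ≤ (2*r+δ)^b :=
      le_trans h1 (Real.rpow_le_rpow (by positivity) (by linarith) hb.le)
    rw [div_le_div_iff₀ (by positivity) hb]
    nlinarith [hδb, h2rb, hb]
  -- final contradiction
  have key := hM z r hr0 hQsub
  have hVpos : (0:ℝ) < (2*r)^N*(2*r) := by positivity
  have hA : r ≤ ((volume (Metric.ball z r)).toReal)⁻¹ *
      ∫ p in Metric.ball z r, p.2 ^ (1 - 2 * s p.1) ∂volume := by
    rw [hV, inv_mul_eq_div, le_div_iff₀ hVpos]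
    calc r * ((2*r)^N*(2*r)) = (2*r)^N * (2*r^2) := by ring
      _ ≤ _ := hI1low
  have hB : 1/(4*r*b) ≤ ((volume (Metric.ball z r)).toReal)⁻¹ *
      ∫ p in Metric.ball z r, p.2 ^ (2 * s p.1 - 1) ∂volume := by
    rw [hV, inv_mul_eq_div, le_div_iff₀ hVpos]
    calc 1/(4*r*b) * ((2*r)^N*(2*r)) = (2*r)^N * (1/(2*b)) := by
          field_simp
          ring
      _ ≤ _ := hI2low
  have hfinal : 1/(4*b) ≤
      (((volume (Metric.ball z r)).toReal)⁻¹ *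
        ∫ p in Metric.ball z r, p.2 ^ (1 - 2 * s p.1) ∂volume) *
      (((volume (Metric.ball z r)).toReal)⁻¹ *
        ∫ p in Metric.ball z r, p.2 ^ (2 * s p.1 - 1) ∂volume) := by
    have hrne : r ≠ 0 := hr0.ne'
    have hbne : b ≠ 0 := hb.ne'
    calc 1/(4*b) = r * (1/(4*r*b)) := by
          field_simp
      _ ≤ _ := mul_le_mul hA hB (by positivity) (le_trans hr0.le hA)
  have hMlt : M < 1/(4*b) := by
    have h4b : (0:ℝ) < 4*b := by linarith
    have h2' : b * (4*(|M|+1)) < 1 := (lt_div_iff₀ (by positivity)).1 h2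
    have h3' : (|M|+1) * (4*b) = b * (4*(|M|+1)) := by ring
    have h5 : (|M|+1) < 1/(4*b) := by
      rw [lt_div_iff₀ h4b, h3']
      exact h2'
    have h6 : M ≤ |M| := le_abs_self M
    linarith
  linarith [key, hfinal, hMlt]
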